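/- arXiv:1809.04542 — 3 statements merged into one kernel-verified Lean document; each statement's English description precedes it below -/
import Mathlib

section
/- For a lower semicontinuous convex function f : ℝ → (-∞,∞] with f(1) = 0 that is finite in a neighbourhood of 1, the function x ↦ f*(x) − x tends to ∞ as |x| → ∞, where f* is the convex conjugate of f. -/
open MeasureTheory Filter ENNReal

/-- Convex conjugate of an extended-real-valued function on ℝ. -/
noncomputable def fStar (f : ℝ → EReal) (s : ℝ) : EReal := ⨆ x : ℝ, ((s * x : ℝ) : EReal) - f x

lemma fStar_lower (f : ℝ → EReal) (s x : ℝ) :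
    ((s * x : ℝ) : EReal) - f x ≤ fStar f s := le_iSup (fun x => ((s * x : ℝ) : EReal) - f x) x

/-- If f : ℝ → (-∞,∞] is lower semicontinuous, convex, f(1) = 0 and f is finite in a
neighbourhood of 1, then f*(x) − x → ∞ as |x| → ∞. -/
theorem fStar_sub_id_tendsto_top (f : ℝ → EReal)
    (hlsc : LowerSemicontinuous f)
    (hconv : ∀ (x y a b : ℝ), 0 < a → 0 < b → a + b = 1 →
      f (a * x + b * y) ≤ (a : EReal) * f x + (b : EReal) * f y)
    (hbot : ∀ x, f x ≠ ⊥) (h1 : f 1 = 0)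
    (hfin : ∃ ε > (0:ℝ), ∀ x : ℝ, |x - 1| < ε → f x ≠ ⊤) :
    Tendsto (fun x : ℝ => fStar f x - (x : EReal)) (cocompact ℝ) (nhds ⊤) := by
  obtain ⟨ε, hε, hf⟩ := hfin
  set δ : ℝ := ε / 2 with hδdef
  have hδ : 0 < δ := by positivity
  have hδε : δ < ε := by simp [hδdef]; linarith
  have hfp : f (1 + δ) ≠ ⊤ := hf _ (by rw [abs_of_nonneg (by linarith : (0:ℝ) ≤ 1 + δ - 1)]; linarith)
  have hfm : f (1 - δ) ≠ ⊤ := hf _ (by rw [abs_of_nonpos (by linarith : (1 - δ - 1 : ℝ) ≤ 0)]; simp; linarith)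
  set a : ℝ := (f (1 + δ)).toReal with ha
  set b : ℝ := (f (1 - δ)).toReal with hb
  have hfa : f (1 + δ) = (a : EReal) := (EReal.coe_toReal hfp (hbot _)).symm
  have hfb : f (1 - δ) = (b : EReal) := (EReal.coe_toReal hfm (hbot _)).symm
  -- key lower bounds
  have key₁ : ∀ s : ℝ, ((s * δ - a : ℝ) : EReal) ≤ fStar f s - (s : EReal) := by
    intro s
    have h := fStar_lower f s (1 + δ)
    rw [hfa] at h
    calc ((s * δ - a : ℝ) : EReal) = ((s * (1 + δ) - a - s : ℝ) : EReal) := by ring_nf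
      _ = (((s * (1 + δ) : ℝ) : EReal) - (a : EReal)) - (s : EReal) := by
          rw [← EReal.coe_sub, ← EReal.coe_sub]
      _ ≤ fStar f s - (s : EReal) := by
          exact EReal.sub_le_sub (by rwa [← EReal.coe_sub] at h) le_rfl
  have key₂ : ∀ s : ℝ, ((-(s * δ) - b : ℝ) : EReal) ≤ fStar f s - (s : EReal) := by
    intro s
    have h := fStar_lower f s (1 - δ)
    rw [hfb] at h
    calc ((-(s * δ) - b : ℝ) : EReal) = ((s * (1 - δ) - b - s : ℝ) : EReal) := by ring_nf
      _ = (((s * (1 - δ) : ℝ) : EReal) - (b : EReal)) - (s : EReal) := by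
          rw [← EReal.coe_sub, ← EReal.coe_sub]
      _ ≤ fStar f s - (s : EReal) := EReal.sub_le_sub h le_rfl
  rw [cocompact_eq_atBot_atTop, tendsto_sup]
  constructor
  · rw [EReal.tendsto_nhds_top_iff_real]
    intro M
    filter_upwards [eventually_le_atBot (-((M + b + 1) / δ))] with s hs
    refine lt_of_lt_of_le ?_ (key₂ s)
    have : M < -(s * δ) - b := by
      have : s * δ ≤ -(M + b + 1) := by
        have h2 := mul_le_mul_of_nonneg_right hs hδ.le
        rwa [neg_mul, div_mul_cancel₀ _ hδ.ne'] at h2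
      linarith
    exact_mod_cast this
  · rw [EReal.tendsto_nhds_top_iff_real]
    intro M
    filter_upwards [eventually_ge_atTop ((M + a + 1) / δ)] with s hs
    refine lt_of_lt_of_le ?_ (key₁ s)
    have : M < s * δ - a := by
      have := mul_le_mul_of_nonneg_right hs hδ.le
      rw [div_mul_cancel₀ _ hδ.ne'] at this
      linarith
    exact_mod_cast this
end

section
/- Let (Ω, Σ) be a measurable space, Q a probability measure, and f* : ℝ → (-∞,∞] the convex conjugate of a proper lsc convex function f. Then the map h ↦ ∫ f*(h) dQ, defined on bounded measurable functions with the uniform-norm topology, is lower semicontinuous. -/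
open MeasureTheory Filter ENNReal

/-- Positive part of an extended real, as an extended nonnegative real. -/
noncomputable def erealPos (x : EReal) : ℝ≥0∞ := if x = ⊤ then ⊤ else ENNReal.ofReal x.toReal

/-- Integral of an extended-real-valued function, with values in [-∞,∞]. -/
noncomputable def eintegral {Ω : Type*} [MeasurableSpace Ω] (Q : Measure Ω) (g : Ω → EReal) : EReal :=
  ((∫⁻ x, erealPos (g x) ∂Q) : EReal) - ((∫⁻ x, erealPos (-(g x)) ∂Q) : EReal)

/-- The set B(Ω,Σ) of bounded measurable real-valued functions. -/
def BM (Ω : Type*) [MeasurableSpace Ω] : Set (Ω → ℝ) :=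
  {g | Measurable g ∧ ∃ C, ∀ x, |g x| ≤ C}

/-- R(h) = inf_{b ∈ ℝ} ( E_Q[f*(h + b)] − b ). -/
noncomputable def Rfun {Ω : Type*} [MeasurableSpace Ω] (Q : Measure Ω) (f : ℝ → EReal)
    (h : Ω → ℝ) : EReal :=
  ⨅ b : ℝ, eintegral Q (fun x => fStar f (h x + b)) - (b : EReal)

lemma erealPos_coe (r : ℝ) : erealPos (r : EReal) = ENNReal.ofReal r := by
  simp [erealPos]

lemma erealPos_bot : erealPos (⊥ : EReal) = 0 := by simp [erealPos]

lemma erealPos_top : erealPos (⊤ : EReal) = ⊤ := by simp [erealPos]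

lemma erealPos_mono : Monotone erealPos := by
  intro x y hxy
  rcases eq_or_ne y ⊤ with hy | hy
  · simp [erealPos, hy]
  · have hx : x ≠ ⊤ := fun h => hy (top_le_iff.mp (h ▸ hxy))
    simp only [erealPos, if_neg hx, if_neg hy]
    rcases eq_or_ne x ⊥ with hb | hb
    · simp [hb]
    · exact ENNReal.ofReal_le_ofReal (EReal.toReal_le_toReal hxy hb hy)

lemma measurable_erealPos : Measurable erealPos := by
  have hs : MeasurableSet {x : EReal | x = ⊤} := by
    simpa [Set.setOf_eq_eq_singleton] using measurableSet_singleton (⊤ : EReal)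
  exact Measurable.ite hs measurable_const
    (ENNReal.measurable_ofReal.comp measurable_ereal_toReal)

lemma erealPos_nonpos {x : EReal} (hx : x ≤ 0) : erealPos x = 0 := by
  have := erealPos_mono hx
  rw [show ((0:EReal)) = ((0:ℝ):EReal) by norm_cast, erealPos_coe] at this
  simpa using this

lemma erealPos_iSup (u : ℕ → EReal) :
    (⨆ k, erealPos (u k)) = erealPos (⨆ k, u k) := by
  refine le_antisymm (iSup_le fun k => erealPos_mono (le_iSup u k)) ?_
  set s := ⨆ k, u k with hs
  rcases eq_or_ne s ⊤ with h | h
  · rw [h, erealPos_top, top_le_iff]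
    apply ENNReal.eq_top_of_forall_nnreal_le
    intro r
    have hr : ((r : ℝ) : EReal) < s := by rw [h]; exact EReal.coe_lt_top _
    obtain ⟨k, hk⟩ := lt_iSup_iff.mp (hs ▸ hr)
    calc (r : ℝ≥0∞) = erealPos ((r : ℝ) : EReal) := by
          rw [erealPos_coe, ENNReal.ofReal_coe_nnreal]
      _ ≤ erealPos (u k) := erealPos_mono hk.le
      _ ≤ ⨆ k, erealPos (u k) := le_iSup (fun k => erealPos (u k)) k
  · rcases eq_or_ne s ⊥ with hb | hb
    · rw [hb, erealPos_bot]; exact zero_le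
    · have hsr : s = ((s.toReal : ℝ) : EReal) := (EReal.coe_toReal h hb).symm
      have hps : erealPos s = ENNReal.ofReal s.toReal := by
        rw [hsr, erealPos_coe]; simp
      rw [hps]
      refine ENNReal.le_of_forall_pos_le_add fun ε hε _ => ?_
      have hlt : ((s.toReal - (ε : ℝ) : ℝ) : EReal) < s := by
        rw [hsr]
        exact_mod_cast (by simp [hε] : s.toReal - (ε:ℝ) < s.toReal)
      obtain ⟨k, hk⟩ := lt_iSup_iff.mp (hs ▸ hlt)
      calc ENNReal.ofReal s.toReal
          = ENNReal.ofReal ((s.toReal - (ε:ℝ)) + (ε:ℝ)) := by ring_nf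
        _ ≤ ENNReal.ofReal (s.toReal - (ε:ℝ)) + ENNReal.ofReal (ε:ℝ) :=
            ENNReal.ofReal_add_le
        _ = erealPos ((s.toReal - (ε:ℝ) : ℝ) : EReal) + ε := by
            rw [erealPos_coe, ENNReal.ofReal_coe_nnreal]
        _ ≤ (⨆ k, erealPos (u k)) + ε := by
            gcongr
            exact le_iSup_of_le k (erealPos_mono hk.le)

lemma erealPos_iInf (v : ℕ → EReal) :
    (⨅ k, erealPos (v k)) = erealPos (⨅ k, v k) := by
  refine le_antisymm ?_ (le_iInf fun k => erealPos_mono (iInf_le v k))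
  set s := ⨅ k, v k with hs
  rcases eq_or_ne s ⊥ with h | h
  · rw [h, erealPos_bot]
    have : s < 0 := by rw [h]; exact bot_lt_iff_ne_bot.mpr (by simp)
    obtain ⟨k, hk⟩ := iInf_lt_iff.mp (hs ▸ this)
    exact iInf_le_of_le k (le_of_eq (erealPos_nonpos hk.le))
  · rcases eq_or_ne s ⊤ with ht | ht
    · have : ∀ k, v k = ⊤ := fun k => top_le_iff.mp (ht ▸ iInf_le v k)
      simp [this, ht, erealPos_top]
    · have hsr : s = ((s.toReal : ℝ) : EReal) := (EReal.coe_toReal ht h).symm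
      rw [show erealPos s = ENNReal.ofReal s.toReal by rw [hsr, erealPos_coe]; simp]
      refine ENNReal.le_of_forall_pos_le_add fun ε hε _ => ?_
      have hlt : s < ((s.toReal + (ε : ℝ) : ℝ) : EReal) := by
        rw [hsr]
        exact_mod_cast (by simp [hε] : s.toReal < s.toReal + (ε:ℝ))
      obtain ⟨k, hk⟩ := iInf_lt_iff.mp (hs ▸ hlt)
      calc (⨅ k, erealPos (v k)) ≤ erealPos (v k) := iInf_le _ k
        _ ≤ erealPos ((s.toReal + (ε:ℝ) : ℝ) : EReal) := erealPos_mono hk.le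
        _ = ENNReal.ofReal (s.toReal + (ε:ℝ)) := erealPos_coe _
        _ ≤ ENNReal.ofReal s.toReal + ENNReal.ofReal (ε:ℝ) := ENNReal.ofReal_add_le
        _ = ENNReal.ofReal s.toReal + ε := by rw [ENNReal.ofReal_coe_nnreal]

lemma fStar_mono {f : ℝ → EReal} (hneg : ∀ x : ℝ, x < 0 → f x = ⊤) : Monotone (fStar f) := by
  intro s t hst
  refine iSup_mono fun x => ?_
  rcases lt_or_ge x 0 with hx | hx
  · rw [hneg x hx, EReal.sub_top, EReal.sub_top]
  · exact EReal.sub_le_sub (EReal.coe_le_coe_iff.mpr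
      (mul_le_mul_of_nonneg_right hst hx)) le_rfl

lemma coe_le_fStar {f : ℝ → EReal} (h1 : f 1 = 0) (s : ℝ) : (s : EReal) ≤ fStar f s := by
  have := le_iSup (fun x : ℝ => ((s * x : ℝ) : EReal) - f x) 1
  exact le_trans (le_of_eq (by simp [h1])) this

lemma fStar_lsc {f : ℝ → EReal} (hbot : ∀ x, f x ≠ ⊥) : LowerSemicontinuous (fStar f) := by
  apply lowerSemicontinuous_iSup
  intro x
  rcases eq_or_ne (f x) ⊤ with hx | hx
  · have : (fun s : ℝ => ((s * x : ℝ) : EReal) - f x) = fun _ => (⊥ : EReal) := by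
      funext s; rw [hx, EReal.sub_top]
    rw [this]
    exact lowerSemicontinuous_const
  · obtain ⟨r, hr⟩ : ∃ r : ℝ, f x = (r : EReal) := by
      lift f x to ℝ using ⟨hx, hbot x⟩ with r hr
      exact ⟨r, rfl⟩
    have : (fun s : ℝ => ((s * x : ℝ) : EReal) - f x)
        = fun s : ℝ => (((s * x - r : ℝ)) : EReal) := by
      funext s; rw [hr, ← EReal.coe_sub]
    rw [this]
    exact (continuous_coe_real_ereal.comp (by continuity)).lowerSemicontinuous

lemma fStar_measurable {f : ℝ → EReal} (hbot : ∀ x, f x ≠ ⊥) : Measurable (fStar f) :=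
  (fStar_lsc hbot).measurable

lemma fStar_iSup_seq {f : ℝ → EReal} (hbot : ∀ x, f x ≠ ⊥)
    (hneg : ∀ x : ℝ, x < 0 → f x = ⊤) (t : ℝ) :
    (⨆ k : ℕ, fStar f (t - 1 / (k + 1))) = fStar f t := by
  refine le_antisymm (iSup_le fun k => fStar_mono hneg (by
    have : (0:ℝ) < 1 / (k + 1) := by positivity
    linarith)) ?_
  refine le_of_forall_lt fun c hc => ?_
  have hev := fStar_lsc hbot t c hc
  have htend : Tendsto (fun k : ℕ => t - 1 / (k + 1 : ℝ)) atTop (nhds t) := by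
    have h0 : Tendsto (fun k : ℕ => 1 / (k + 1 : ℝ)) atTop (nhds 0) :=
      tendsto_one_div_add_atTop_nhds_zero_nat
    simpa using (tendsto_const_nhds.sub h0)
  obtain ⟨k, hk⟩ := (htend.eventually hev).exists
  exact lt_of_lt_of_le hk (le_iSup (fun k : ℕ => fStar f (t - 1 / (k + 1))) k)

lemma eintegral_mono {Ω : Type*} [MeasurableSpace Ω] (Q : Measure Ω) {g1 g2 : Ω → EReal}
    (hg : ∀ x, g1 x ≤ g2 x) : eintegral Q g1 ≤ eintegral Q g2 := by
  refine EReal.sub_le_sub ?_ ?_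
  · exact EReal.coe_ennreal_le_coe_ennreal_iff.mpr
      (lintegral_mono fun x => erealPos_mono (hg x))
  · exact EReal.coe_ennreal_le_coe_ennreal_iff.mpr
      (lintegral_mono fun x => erealPos_mono (EReal.neg_le_neg_iff.mpr (hg x)))

lemma key_sub_eq (a b m : ℝ≥0∞) (hbm : b ≤ m) (hm : m ≠ ⊤) :
    ((a + (m - b) : ℝ≥0∞) : EReal) - (m : EReal) = (a : EReal) - (b : EReal) := by
  have hb : b ≠ ⊤ := fun h => hm (top_le_iff.mp (h ▸ hbm))
  rcases eq_or_ne a ⊤ with ha | ha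
  · rw [ha]
    rw [top_add, EReal.coe_ennreal_top]
    lift m to NNReal using hm
    lift b to NNReal using hb
    rw [EReal.coe_nnreal_eq_coe_real, EReal.coe_nnreal_eq_coe_real,
        EReal.top_sub_coe, EReal.top_sub_coe]
  · lift a to NNReal using ha
    lift b to NNReal using hb
    lift m to NNReal using hm
    have hbm' : b ≤ m := by exact_mod_cast hbm
    rw [← ENNReal.coe_sub, ← ENNReal.coe_add]
    rw [EReal.coe_nnreal_eq_coe_real, EReal.coe_nnreal_eq_coe_real,
        EReal.coe_nnreal_eq_coe_real, EReal.coe_nnreal_eq_coe_real,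
        ← EReal.coe_sub, ← EReal.coe_sub]
    norm_cast
    rw [NNReal.coe_add, NNReal.coe_sub hbm']
    ring

lemma ereal_iInf_neg (u : ℕ → EReal) : (⨅ k, -(u k)) = -(⨆ k, u k) := by
  refine le_antisymm ?_ (le_iInf fun k => EReal.neg_le_neg_iff.mpr (le_iSup u k))
  rw [← neg_neg (⨅ k, -(u k)), EReal.neg_le_neg_iff]
  exact iSup_le fun k => by
    rw [← neg_neg (u k), EReal.neg_le_neg_iff]
    exact iInf_le (fun k => -(u k)) k

lemma coe_ennreal_iSup (g : ℕ → ℝ≥0∞) :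
    ((⨆ k, g k : ℝ≥0∞) : EReal) = ⨆ k, ((g k : ℝ≥0∞) : EReal) :=
  Monotone.map_ciSup_of_continuousAt (continuous_coe_ennreal_ereal.continuousAt)
    (fun _ _ h => EReal.coe_ennreal_le_coe_ennreal_iff.mpr h)

lemma eintegral_repr {Ω : Type*} [MeasurableSpace Ω] (Q : Measure Ω) [IsProbabilityMeasure Q]
    {g : Ω → EReal} (hgm : Measurable g) {c : ℝ≥0∞} (hc : c ≠ ⊤)
    (hbd : ∀ x, erealPos (-(g x)) ≤ c) :
    eintegral Q g =
      ((∫⁻ x, (erealPos (g x) + (c - erealPos (-(g x)))) ∂Q : ℝ≥0∞) : EReal) - (c : EReal) := by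
  have hgneg : Measurable fun x => -(g x) := hgm.neg
  have hmeas : Measurable fun x => erealPos (-(g x)) := measurable_erealPos.comp hgneg
  have hconst : (∫⁻ _, c ∂Q) = c := by simp [lintegral_const]
  have hB : (∫⁻ x, erealPos (-(g x)) ∂Q) ≤ c := by
    calc (∫⁻ x, erealPos (-(g x)) ∂Q) ≤ ∫⁻ _, c ∂Q := lintegral_mono fun x => hbd x
      _ = c := hconst
  have hBfin : (∫⁻ x, erealPos (-(g x)) ∂Q) ≠ ⊤ := fun h => hc (top_le_iff.mp (h ▸ hB))
  have hsub : (∫⁻ x, (c - erealPos (-(g x))) ∂Q)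
      = c - ∫⁻ x, erealPos (-(g x)) ∂Q := by
    have h2 := lintegral_sub hmeas hBfin
      (Filter.Eventually.of_forall hbd :
        (fun x => erealPos (-(g x))) ≤ᵐ[Q] fun _ => c)
    simpa [hconst] using h2
  rw [show (∫⁻ x, (erealPos (g x) + (c - erealPos (-(g x)))) ∂Q)
      = (∫⁻ x, erealPos (g x) ∂Q) + (∫⁻ x, (c - erealPos (-(g x))) ∂Q) from
      lintegral_add_left (by exact measurable_erealPos.comp hgm) _, hsub,
    key_sub_eq _ _ _ hB hc]
  rfl

/-- The map h ↦ ∫ f*(h) dQ on bounded measurable functions is lower semicontinuous with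
respect to the uniform norm (sequential formulation). -/
theorem eintegral_fStar_lowerSemicontinuous {Ω : Type*} [MeasurableSpace Ω]
    (Q : Measure Ω) [IsProbabilityMeasure Q] (f : ℝ → EReal)
    (hlsc : LowerSemicontinuous f)
    (hconv : ∀ (x y a b : ℝ), 0 < a → 0 < b → a + b = 1 →
      f (a * x + b * y) ≤ (a : EReal) * f x + (b : EReal) * f y)
    (hbot : ∀ x, f x ≠ ⊥) (h1 : f 1 = 0) (hneg : ∀ x : ℝ, x < 0 → f x = ⊤)
    (h : Ω → ℝ) (hh : h ∈ BM Ω) (hn : ℕ → Ω → ℝ) (hhn : ∀ n, hn n ∈ BM Ω)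
    (hconv' : TendstoUniformly hn h atTop) :
    eintegral Q (fun x => fStar f (h x)) ≤
      liminf (fun n => eintegral Q (fun x => fStar f (hn n x))) atTop := by
  obtain ⟨hmeas_h, C, hC⟩ := hh
  set L := liminf (fun n => eintegral Q (fun x => fStar f (hn n x))) atTop with hL
  set c : ℝ≥0∞ := ENNReal.ofReal (C + 1) with hcdef
  have hc : c ≠ ⊤ := ENNReal.ofReal_ne_top
  have hbd' : ∀ t : ℝ, -(C + 1) ≤ t → erealPos (-(fStar f t)) ≤ c := by
    intro t ht
    have hle : -(fStar f t) ≤ ((C + 1 : ℝ) : EReal) := by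
      rw [EReal.neg_le, ← EReal.coe_neg]
      calc ((-(C + 1) : ℝ) : EReal) ≤ (t : EReal) := EReal.coe_le_coe_iff.mpr ht
        _ ≤ fStar f t := coe_le_fStar h1 t
    calc erealPos (-(fStar f t)) ≤ erealPos ((C + 1 : ℝ) : EReal) := erealPos_mono hle
      _ = c := by rw [erealPos_coe]
  have hrepr : ∀ g : Ω → ℝ, Measurable g → (∀ x, -(C + 1) ≤ g x) →
      eintegral Q (fun x => fStar f (g x)) =
        ((∫⁻ x, (erealPos (fStar f (g x)) + (c - erealPos (-(fStar f (g x))))) ∂Q : ℝ≥0∞) :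
          EReal) - (c : EReal) := by
    intro g hg hbg
    exact eintegral_repr Q ((fStar_measurable hbot).comp hg) hc fun x => hbd' _ (hbg x)
  set gk : ℕ → Ω → ℝ := fun (k : ℕ) (x : Ω) => h x - 1 / ((k : ℝ) + 1) with hgk
  have hmono_k : ∀ x, Monotone fun k : ℕ => fStar f (gk k x) := by
    intro x k l hkl
    apply fStar_mono hneg
    have hkl' : ((k : ℝ) + 1) ≤ ((l : ℝ) + 1) := by
      have : (k : ℝ) ≤ (l : ℝ) := Nat.cast_le.mpr hkl
      linarith
    have : 1 / ((l : ℝ) + 1) ≤ 1 / ((k : ℝ) + 1) :=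
      one_div_le_one_div_of_le (by positivity) hkl'
    simp only [hgk]
    linarith
  have hboundk : ∀ (k : ℕ) (x : Ω), -(C + 1) ≤ gk k x := by
    intro k x
    have h1k : (0 : ℝ) < 1 / ((k : ℝ) + 1) := by positivity
    have h1k' : 1 / ((k : ℝ) + 1) ≤ 1 := by
      rw [div_le_one (by positivity)]
      have : (0:ℝ) ≤ (k : ℝ) := Nat.cast_nonneg k
      linarith
    have := (abs_le.mp (hC x)).1
    simp only [hgk]
    linarith
  have hboundh : ∀ x, -(C + 1) ≤ h x := fun x => by
    have := (abs_le.mp (hC x)).1; linarith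
  have step1 : ∀ k : ℕ, eintegral Q (fun x => fStar f (gk k x)) ≤ L := by
    intro k
    refine Filter.le_liminf_of_le (by isBoundedDefault) ?_
    have hev := Metric.tendstoUniformly_iff.mp hconv' (1 / ((k : ℝ) + 1)) (by positivity)
    filter_upwards [hev] with n hev'
    apply eintegral_mono
    intro x
    apply fStar_mono hneg
    have hd := hev' x
    rw [Real.dist_eq] at hd
    have h2 := (abs_lt.mp hd).2
    simp only [hgk]
    linarith
  set φ : ℕ → Ω → ℝ≥0∞ := fun k x =>
    erealPos (fStar f (gk k x)) + (c - erealPos (-(fStar f (gk k x)))) with hφ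
  set ψ : Ω → ℝ≥0∞ := fun x =>
    erealPos (fStar f (h x)) + (c - erealPos (-(fStar f (h x)))) with hψ
  have hptsup : ∀ x, ψ x = ⨆ k, φ k x := by
    intro x
    have hu : (⨆ k : ℕ, fStar f (h x - 1 / (k + 1))) = fStar f (h x) :=
      fStar_iSup_seq hbot hneg (h x)
    have e1 : erealPos (fStar f (h x)) = ⨆ k, erealPos (fStar f (gk k x)) := by
      rw [← hu, ← erealPos_iSup]
    have e2 : erealPos (-(fStar f (h x))) = ⨅ k, erealPos (-(fStar f (gk k x))) := by
      rw [← hu, ← ereal_iInf_neg, ← erealPos_iInf]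
    simp only [hψ, hφ, e1, e2, ENNReal.sub_iInf]
    exact ENNReal.iSup_add_iSup_of_monotone
      (fun k l hkl => erealPos_mono (hmono_k x hkl))
      (fun k l hkl => tsub_le_tsub_left
        (erealPos_mono (EReal.neg_le_neg_iff.mpr (hmono_k x hkl))) c)
  have hφmeas : ∀ k, Measurable (φ k) := by
    intro k
    have hgkm : Measurable (gk k) := hmeas_h.sub measurable_const
    have hf : Measurable fun x => fStar f (gk k x) := (fStar_measurable hbot).comp hgkm
    exact (measurable_erealPos.comp hf).add
      (measurable_const.sub (measurable_erealPos.comp hf.neg))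
  have hφmono : Monotone φ := by
    intro k l hkl x
    exact add_le_add (erealPos_mono (hmono_k x hkl))
      (tsub_le_tsub_left (erealPos_mono (EReal.neg_le_neg_iff.mpr (hmono_k x hkl))) c)
  have hMCT : (∫⁻ x, ψ x ∂Q) = ⨆ k, ∫⁻ x, φ k x ∂Q := by
    rw [show (fun x => ψ x) = fun x => ⨆ k, φ k x from funext hptsup]
    exact lintegral_iSup hφmeas hφmono
  have hreph : eintegral Q (fun x => fStar f (h x)) = ((∫⁻ x, ψ x ∂Q : ℝ≥0∞) : EReal) - c :=
    hrepr h hmeas_h hboundh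
  have hrepk : ∀ k, eintegral Q (fun x => fStar f (gk k x)) =
      ((∫⁻ x, φ k x ∂Q : ℝ≥0∞) : EReal) - c := fun k =>
    hrepr (gk k) (hmeas_h.sub measurable_const) (hboundk k)
  have hcb : (c : EReal) ≠ ⊥ := EReal.coe_ennreal_ne_bot c
  have hct : (c : EReal) ≠ ⊤ := by
    simpa [EReal.coe_ennreal_eq_top_iff] using hc
  have hΦk : ∀ k, ((∫⁻ x, φ k x ∂Q : ℝ≥0∞) : EReal) ≤ L + c := by
    intro k
    have hk := step1 k
    rw [hrepk k] at hk
    exact (EReal.sub_le_iff_le_add (Or.inl hcb) (Or.inl hct)).mp hk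
  have hfin : ((∫⁻ x, ψ x ∂Q : ℝ≥0∞) : EReal) ≤ L + c := by
    rw [hMCT, coe_ennreal_iSup]
    exact iSup_le hΦk
  rw [hreph]
  exact (EReal.sub_le_iff_le_add (Or.inl hcb) (Or.inl hct)).mpr hfin
end

section
/- If P' is a finitely additive probability measure absolutely continuous w.r.t. the countably additive probability measure Q, then R*(P') = sup over bounded measurable h of ( ∫ h dP' − ∫ f*(h) dQ ), i.e., R*(P') equals the extended f-divergence D̄_f(P'‖Q), where R(h) = inf_{b∈ℝ} ( E_Q[f*(h+b)] − b ). -/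
open MeasureTheory Filter ENNReal

lemma ereal_sub_sub (A : EReal) (c b : ℝ) :
    (c : EReal) - (A - (b : EReal)) = ((c + b : ℝ) : EReal) - A := by
  induction A using EReal.rec with
  | bot => rw [EReal.bot_sub, EReal.coe_sub_bot, EReal.coe_sub_bot]
  | top => rw [EReal.top_sub_coe, EReal.sub_top, EReal.sub_top]
  | coe a =>
    rw [← EReal.coe_sub, ← EReal.coe_sub, ← EReal.coe_sub, EReal.coe_eq_coe_iff]
    ring

lemma ereal_sub_iInf_le (c : ℝ) (g : ℝ → EReal) :
    (c : EReal) - ⨅ b, g b ≤ ⨆ b, ((c : EReal) - g b) := by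
  rw [le_iSup_iff]
  intro M hM
  induction M using EReal.rec with
  | top => exact le_top
  | bot =>
    have hg : ∀ b, g b = ⊤ := by
      intro b
      by_contra hb
      have key : ∀ t : EReal, t ≠ ⊤ → (c : EReal) - t ≠ ⊥ := by
        intro t ht
        induction t using EReal.rec with
        | bot => rw [EReal.coe_sub_bot]; exact (bot_lt_top).ne'
        | top => exact absurd rfl ht
        | coe a => rw [← EReal.coe_sub]; exact EReal.coe_ne_bot _
      exact key (g b) hb (le_bot_iff.mp (hM b))
    simp [hg, EReal.sub_top]
  | coe M =>
    have h1 : ∀ b, ((c - M : ℝ) : EReal) ≤ g b := by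
      intro b
      have h2 : (c : EReal) ≤ (M : EReal) + g b :=
        (EReal.sub_le_iff_le_add (Or.inr (EReal.coe_ne_top M))
          (Or.inr (EReal.coe_ne_bot M))).mp (hM b)
      have := EReal.sub_le_of_le_add' h2
      rwa [← EReal.coe_sub] at this
    calc (c : EReal) - ⨅ b, g b ≤ (c : EReal) - ((c - M : ℝ) : EReal) :=
          EReal.sub_le_sub le_rfl (le_iInf h1)
      _ = (M : EReal) := by rw [← EReal.coe_sub, EReal.coe_eq_coe_iff]; ring

/-- If P' is a finitely additive probability measure (represented by its integration functional
I on bounded measurable functions) absolutely continuous w.r.t. the countably additive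
probability measure Q, then R*(P') = sup_h ( ∫ h dP' − ∫ f*(h) dQ ) = D̄_f(P'‖Q), where
R(h) = inf_b ( E_Q[f*(h+b)] − b ). -/
theorem Rstar_eq_Dbar {Ω : Type*} [MeasurableSpace Ω]
    (Q : Measure Ω) [IsProbabilityMeasure Q] (f : ℝ → EReal)
    (hlsc : LowerSemicontinuous f)
    (hconv : ∀ (x y a b : ℝ), 0 < a → 0 < b → a + b = 1 →
      f (a * x + b * y) ≤ (a : EReal) * f x + (b : EReal) * f y)
    (hbot : ∀ x, f x ≠ ⊥) (h1 : f 1 = 0) (hneg : ∀ x : ℝ, x < 0 → f x = ⊤)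
    (hfin : ∃ ε > (0:ℝ), ∀ x : ℝ, |x - 1| < ε → f x ≠ ⊤)
    (I : (Ω → ℝ) → ℝ)
    (hadd : ∀ g g', g ∈ BM Ω → g' ∈ BM Ω → I (g + g') = I g + I g')
    (hsmul : ∀ (c : ℝ) (g : Ω → ℝ), g ∈ BM Ω → I (c • g) = c * I g)
    (hpos : ∀ g ∈ BM Ω, (∀ x, 0 ≤ g x) → 0 ≤ I g)
    (hmass : I (fun _ => (1:ℝ)) = 1)
    (hac : ∀ E : Set Ω, MeasurableSet E → Q E = 0 → I (Set.indicator E fun _ => (1:ℝ)) = 0) :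
    (⨆ h ∈ BM Ω, ((I h : EReal) - Rfun Q f h)) =
      ⨆ h ∈ BM Ω, ((I h : EReal) - eintegral Q (fun x => fStar f (h x))) := by
  have hconstBM : ∀ b : ℝ, (fun _ : Ω => b) ∈ BM Ω :=
    fun b => ⟨measurable_const, |b|, fun _ => le_rfl⟩
  have hIconst : ∀ b : ℝ, I (fun _ => b) = b := by
    intro b
    have h2 : I (b • fun _ : Ω => (1:ℝ)) = b * I (fun _ => (1:ℝ)) :=
      hsmul b _ (hconstBM 1)
    have h3 : (b • fun _ : Ω => (1:ℝ)) = fun _ : Ω => b := by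
      funext x; simp
    rw [h3, hmass, mul_one] at h2
    exact h2
  apply le_antisymm
  · apply iSup₂_le; intro h hh
    calc (I h : EReal) - Rfun Q f h
        ≤ ⨆ b : ℝ, ((I h : EReal) -
            (eintegral Q (fun x => fStar f (h x + b)) - (b : EReal))) :=
          ereal_sub_iInf_le _ _
      _ ≤ ⨆ g ∈ BM Ω, ((I g : EReal) - eintegral Q (fun x => fStar f (g x))) := by
          apply iSup_le; intro b
          rw [ereal_sub_sub]
          obtain ⟨C, hC⟩ := hh.2
          have hgBM : (h + fun _ : Ω => b) ∈ BM Ω := by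
            refine ⟨hh.1.add measurable_const, C + |b|, fun x => ?_⟩
            calc |(h + fun _ : Ω => b) x| = |h x + b| := by rw [Pi.add_apply]
              _ ≤ |h x| + |b| := abs_add_le _ _
              _ ≤ C + |b| := by linarith [hC x]
          have hIg : I (h + fun _ : Ω => b) = I h + b := by
            rw [hadd h _ hh (hconstBM b), hIconst]
          refine le_iSup₂_of_le (h + fun _ : Ω => b) hgBM (le_of_eq ?_)
          rw [hIg]
          simp only [Pi.add_apply]
      _ = ⨆ g ∈ BM Ω, ((I g : EReal) - eintegral Q (fun x => fStar f (g x))) := rfl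
  · apply iSup₂_le; intro h hh
    refine le_iSup₂_of_le h hh (EReal.sub_le_sub le_rfl ?_)
    have h4 := iInf_le
      (fun b : ℝ => eintegral Q (fun x => fStar f (h x + b)) - (b : EReal)) 0
    simpa [Rfun] using h4
end
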